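/- Let G be a real special 2-group with associated quadratic map q : V → W. For v ∈ V let S_v = {s ∈ Hom(W, F₂) : v ∈ rad(s∘b_q)}. Then the conjugacy class of an element (v,w) ∈ G is {(v, w+w') : s(w') = 0 for all s ∈ S_v}. -/

import Mathlib

structure IsSpecial2Group (G : Type*) [Group G] [Finite G] : Prop where
  card_pow : ∃ n : ℕ, Nat.card G = 2 ^ n
  frattini_eq : frattini G = Subgroup.center G
  commutator_eq : commutator G = Subgroup.center G
  sq_eq_one : ∀ g ∈ Subgroup.center G, g * g = 1

open scoped commutatorElement

private lemma key_conj {G : Type*} [Group G]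
    (hcomm : ∀ x y : G, ⁅x, y⁆ ∈ Subgroup.center G) (x y : G) :
    y⁻¹ * x * y = x * ⁅x, y⁆ := by
  have h2 := Subgroup.mem_center_iff.mp (hcomm x⁻¹ y⁻¹) (x * y)
  have h1 : ⁅x, y⁆ = ⁅x⁻¹, y⁻¹⁆ := by
    have h3 : (x * y) * ⁅x⁻¹, y⁻¹⁆ * (x * y)⁻¹ = ⁅x, y⁆ := by
      simp only [commutatorElement_def]; group
    rw [← h3, h2]; group
  rw [h1, commutatorElement_def]; group

private lemma comm_mul {G : Type*} [Group G]
    (hcomm : ∀ x y : G, ⁅x, y⁆ ∈ Subgroup.center G) (x y z : G) :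
    ⁅x, y * z⁆ = ⁅x, y⁆ * ⁅x, z⁆ := by
  have h1 := key_conj hcomm x (y * z)
  have h2 := key_conj hcomm x y
  have h3 := key_conj hcomm x z
  have hcy := Subgroup.mem_center_iff.mp (hcomm x y) z
  have hcc := Subgroup.mem_center_iff.mp (hcomm x z) ⁅x, y⁆
  have hmain : x * ⁅x, y * z⁆ = x * (⁅x, y⁆ * ⁅x, z⁆) := by
    calc x * ⁅x, y * z⁆ = (y * z)⁻¹ * x * (y * z) := h1.symm
      _ = z⁻¹ * (y⁻¹ * x * y) * z := by group
      _ = z⁻¹ * (x * ⁅x, y⁆) * z := by rw [h2]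
      _ = z⁻¹ * x * (⁅x, y⁆ * z) := by group
      _ = z⁻¹ * x * (z * ⁅x, y⁆) := by rw [← hcy]
      _ = (z⁻¹ * x * z) * ⁅x, y⁆ := by group
      _ = (x * ⁅x, z⁆) * ⁅x, y⁆ := by rw [h3]
      _ = x * (⁅x, y⁆ * ⁅x, z⁆) := by rw [mul_assoc, hcc]
  exact mul_left_cancel hmain

theorem conjugacy_class_via_radical (G : Type*) [Group G] [Finite G]
    (hG : IsSpecial2Group G)
    (hreal : ∀ x : G, IsConj x x⁻¹)
    (hcomm : ∀ x y : G, ⁅x, y⁆ ∈ Subgroup.center G)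
    (x : G) :
    ∀ g : G, IsConj x g ↔
      ∃ z : Subgroup.center G,
        (∀ s : Subgroup.center G →* Multiplicative (ZMod 2),
          (∀ y : G, s ⟨⁅x, y⁆, hcomm x y⟩ = 1) → s z = 1) ∧
        g = x * (z : G) := by
  classical
  intro g
  -- the commutator homomorphism `y ↦ ⁅x, y⁆` into the center
  let φ : G →* Subgroup.center G :=
    { toFun := fun y => ⟨⁅x, y⁆, hcomm x y⟩
      map_one' := by ext; simp
      map_mul' := fun y z => by ext; exact comm_mul hcomm x y z }
  -- conjugates of `x` are exactly `x * φ y`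
  have hconj : ∀ g : G, IsConj x g ↔ ∃ y : G, g = x * (φ y : G) := by
    intro g
    rw [isConj_iff]
    constructor
    · rintro ⟨c, rfl⟩
      refine ⟨c⁻¹, ?_⟩
      have := key_conj hcomm x c⁻¹
      simp only [inv_inv] at this
      show c * x * c⁻¹ = x * (⁅x, c⁻¹⁆ : G)
      exact this
    · rintro ⟨y, rfl⟩
      refine ⟨y⁻¹, ?_⟩
      have := key_conj hcomm x y
      show y⁻¹ * x * y⁻¹⁻¹ = x * (⁅x, y⁆ : G)
      simpa using this
  -- the center as an F₂-vector space
  letI : CommGroup (Subgroup.center G) :=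
    { (inferInstance : Group (Subgroup.center G)) with mul_comm := fun a b => IsMulCommutative.is_comm.comm a b }
  have h2 : ∀ a : Additive (Subgroup.center G), (2 : ℕ) • a = 0 := by
    intro a
    rw [two_nsmul]
    show Additive.ofMul (Additive.toMul a * Additive.toMul a) = 0
    have : (Additive.toMul a : Subgroup.center G) * Additive.toMul a = 1 :=
      Subtype.ext (hG.sq_eq_one _ (SetLike.coe_mem _))
    rw [this]; rfl
  letI : Module (ZMod 2) (Additive (Subgroup.center G)) := AddCommGroup.zmodModule h2
  have hr01 : ∀ r : ZMod 2, r = 0 ∨ r = 1 := by decide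
  -- the range of φ as a subspace
  let p : Submodule (ZMod 2) (Additive (Subgroup.center G)) :=
    { carrier := Set.range (fun y : G => Additive.ofMul (φ y))
      add_mem' := by
        rintro _ _ ⟨a, rfl⟩ ⟨b, rfl⟩
        exact ⟨a * b, by simp only [map_mul]; rfl⟩
      zero_mem' := ⟨1, by simp only [map_one]; rfl⟩
      smul_mem' := by
        intro r a ha
        rcases hr01 r with rfl | rfl
        · rw [zero_smul]; exact ⟨1, by simp only [map_one]; rfl⟩
        · rw [one_smul]; exact ha }
  -- separation: if `z ∉ p` there is a character vanishing on `p` but not on `z`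
  have hsep : ∀ z : Subgroup.center G, Additive.ofMul z ∉ p →
      ∃ s : Subgroup.center G →* Multiplicative (ZMod 2),
        (∀ y : G, s (φ y) = 1) ∧ s z ≠ 1 := by
    intro z hz
    rw [← Subspace.forall_mem_dualAnnihilator_apply_eq_zero_iff p (Additive.ofMul z)] at hz
    push_neg at hz
    obtain ⟨ψ, hψmem, hψz⟩ := hz
    have hψp : ∀ a ∈ p, ψ a = 0 := (Submodule.mem_dualAnnihilator ψ).mp hψmem
    refine ⟨{ toFun := fun c => Multiplicative.ofAdd (ψ (Additive.ofMul c))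
              map_one' := by
                show Multiplicative.ofAdd (ψ 0) = 1
                rw [map_zero]; rfl
              map_mul' := by
                intro a b
                show Multiplicative.ofAdd (ψ (Additive.ofMul a + Additive.ofMul b)) = _
                rw [map_add]; rfl }, ?_, ?_⟩
    · intro y
      show Multiplicative.ofAdd (ψ (Additive.ofMul (φ y))) = 1
      rw [hψp _ ⟨y, rfl⟩]; rfl
    · intro h
      exact hψz (by exact ofAdd_eq_one.mp h)
  rw [hconj]
  constructor
  · rintro ⟨y, rfl⟩
    refine ⟨φ y, fun s hs => hs y, rfl⟩
  · rintro ⟨z, hz, rfl⟩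
    by_cases hmem : Additive.ofMul z ∈ p
    · obtain ⟨y, hy⟩ := hmem
      exact ⟨y, by rw [show φ y = z from hy]⟩
    · obtain ⟨s, hs1, hs2⟩ := hsep z hmem
      exact absurd (hz s fun y => hs1 y) hs2
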